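/- Under the PWGCO model with moment matrix M(ξ_0) = diag(1, I_1+V_1/3, ..., I_{n_G}+V_{n_G}/3), for any permutation π in the feasible set, the leverage x(π)^T M(ξ_0)^{-1} x(π) equals exactly 1 + ∑_{g=1}^{n_G} |G_g|(|G_g|−1)/2, which equals the number of model parameters; hence the uniform measure is G-optimal with G-value equal to the parameter count. -/

import Mathlib

abbrev GPair {m n : ℕ} (G : Fin n → Finset (Fin m)) :=
  {p : Fin m × Fin m // p.1 < p.2 ∧ ∃ g, p.1 ∈ G g ∧ p.2 ∈ G g}

noncomputable def Mmom {m n : ℕ} (G : Fin n → Finset (Fin m)) :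
    Matrix (Unit ⊕ GPair G) (Unit ⊕ GPair G) ℝ := fun a b =>
  match a, b with
  | Sum.inl _, Sum.inl _ => 1
  | Sum.inl _, Sum.inr _ => 0
  | Sum.inr _, Sum.inl _ => 0
  | Sum.inr p, Sum.inr q =>
      if p = q then 1
      else if p.1.1 = q.1.1 ∨ p.1.2 = q.1.2 then 1 / 3
      else if p.1.2 = q.1.1 ∨ p.1.1 = q.1.2 then -(1 / 3)
      else 0

noncomputable def xvec {m n : ℕ} (G : Fin n → Finset (Fin m))
    (π : Equiv.Perm (Fin m)) : (Unit ⊕ GPair G) → ℝ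
  | Sum.inl _ => 1
  | Sum.inr p => if π.symm p.1.1 < π.symm p.1.2 then 1 else -1

namespace S13
open Finset

lemma gauss (k : ℕ) : ∑ a ∈ Finset.range k, (a : ℝ) = k * (k - 1) / 2 := by
  induction k with
  | zero => simp
  | succ k ih => rw [Finset.sum_range_succ, ih]; push_cast; ring

lemma gauss2 (k : ℕ) : ∑ a ∈ Finset.range k, (a : ℝ) * a = k * (k - 1) * (2 * k - 1) / 6 := by
  induction k with
  | zero => simp
  | succ k ih => rw [Finset.sum_range_succ, ih]; push_cast; ring

lemma Eraw {m : ℕ} (i j a b : Fin m) (hij : i < j) (hab : a < b) :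
    (if (i,j) = (a,b) then (1:ℝ) else if i = a ∨ j = b then 1/3
      else if j = a ∨ i = b then -(1/3) else 0)
    = (if (i,j) = (a,b) then 1/3 else 0)
      + 1/3 * ((if i = a then (1:ℝ) else 0) + (if j = b then 1 else 0)
        - (if i = b then 1 else 0) - (if j = a then 1 else 0)) := by
  rw [Fin.lt_def] at hij hab
  simp only [Prod.mk.injEq, Fin.ext_iff]
  split_ifs
  all_goals try norm_num
  all_goals omega

section Main
variable {m n : ℕ} (G : Fin n → Finset (Fin m)) (π : Equiv.Perm (Fin m))

lemma uniq (hd : ∀ g h : Fin n, g ≠ h → Disjoint (G g) (G h))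
    {i : Fin m} {g h : Fin n} (hg : i ∈ G g) (hh : i ∈ G h) : g = h := by
  by_contra hne
  exact (Finset.disjoint_left.mp (hd g h hne) hg) hh

noncomputable def gI (hc : ∀ x : Fin m, ∃ g, x ∈ G g) (i : Fin m) : Fin n := (hc i).choose

lemma gI_mem (hc : ∀ x : Fin m, ∃ g, x ∈ G g) (i : Fin m) : i ∈ G (gI G hc i) :=
  (hc i).choose_spec

lemma gI_eq (hd : ∀ g h : Fin n, g ≠ h → Disjoint (G g) (G h))
    (hc : ∀ x : Fin m, ∃ g, x ∈ G g) {i : Fin m} {g : Fin n} (h : i ∈ G g) :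
    gI G hc i = g := uniq G hd (gI_mem G hc i) h

noncomputable def rkg (g : Fin n) (i : Fin m) : ℕ :=
  ((G g).filter (fun l => π.symm l < π.symm i)).card

noncomputable def rk (hc : ∀ x : Fin m, ∃ g, x ∈ G g) (i : Fin m) : ℕ :=
  rkg G π (gI G hc i) i

noncomputable def xe (p : Fin m × Fin m) : ℝ := if π.symm p.1 < π.symm p.2 then 1 else -1

noncomputable def ye (hc : ∀ x : Fin m, ∃ g, x ∈ G g) (p : Fin m × Fin m) : ℝ :=
  3 * xe π p - 6 / (((G (gI G hc p.1)).card : ℝ) + 1) *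
    ((rk G π hc p.2 : ℝ) - (rk G π hc p.1 : ℝ))

def Sg (g : Fin n) : Finset (Fin m × Fin m) := ((G g) ×ˢ (G g)).filter (fun p => p.1 < p.2)

def SS : Finset (Fin m × Fin m) :=
  Finset.univ.filter (fun p => p.1 < p.2 ∧ ∃ g, p.1 ∈ G g ∧ p.2 ∈ G g)

lemma cnt {g : Fin n} {i : Fin m} (hi : i ∈ G g) :
    (G g).card = rkg G π g i + ((G g).filter (fun l => π.symm i < π.symm l)).card + 1 := by
  classical
  have hsplit : ((G g).filter (fun l => π.symm l < π.symm i)).card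
      + ((G g).filter (fun l => ¬ π.symm l < π.symm i)).card = (G g).card :=
    Finset.card_filter_add_card_filter_not _
  have hset : (G g).filter (fun l => ¬ π.symm l < π.symm i)
      = insert i ((G g).filter (fun l => π.symm i < π.symm l)) := by
    ext l
    simp only [Finset.mem_filter, Finset.mem_insert, not_lt]
    constructor
    · rintro ⟨hl, hle⟩
      rcases lt_or_eq_of_le hle with h | h
      · exact Or.inr ⟨hl, h⟩
      · exact Or.inl (π.symm.injective h.symm)
    · rintro (rfl | ⟨hl, h⟩)
      · exact ⟨hi, le_refl _⟩
      · exact ⟨hl, le_of_lt h⟩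
  have hnotmem : i ∉ (G g).filter (fun l => π.symm i < π.symm l) := by
    simp [Finset.mem_filter]
  rw [hset, Finset.card_insert_of_notMem hnotmem] at hsplit
  unfold rkg
  omega

lemma rk_lt {g : Fin n} {i : Fin m} (hi : i ∈ G g) : rkg G π g i < (G g).card := by
  have := cnt G π hi; omega

lemma rk_mono {g : Fin n} {i j : Fin m} (hi : i ∈ G g) (hj : j ∈ G g)
    (hij : π.symm i < π.symm j) : rkg G π g i < rkg G π g j := by
  apply Finset.card_lt_card
  rw [Finset.ssubset_iff_of_subset]
  · exact ⟨i, by simp [Finset.mem_filter, hi, hij], by simp [Finset.mem_filter]⟩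
  · intro l hl
    simp only [Finset.mem_filter] at hl ⊢
    exact ⟨hl.1, hl.2.trans hij⟩

lemma rk_injOn (g : Fin n) {i j : Fin m} (hi : i ∈ G g) (hj : j ∈ G g)
    (hij : rkg G π g i = rkg G π g j) : i = j := by
  by_contra hne
  rcases lt_or_gt_of_ne (fun h : π.symm i = π.symm j => hne (π.symm.injective h)) with h | h
  · exact absurd hij (Nat.ne_of_lt (rk_mono G π hi hj h))
  · exact absurd hij.symm (Nat.ne_of_lt (rk_mono G π hj hi h))

lemma rk_image (g : Fin n) : (G g).image (rkg G π g) = Finset.range (G g).card := by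
  classical
  apply Finset.eq_of_subset_of_card_le
  · intro a ha
    simp only [Finset.mem_image] at ha
    obtain ⟨i, hi, rfl⟩ := ha
    exact Finset.mem_range.mpr (rk_lt G π hi)
  · rw [Finset.card_range, Finset.card_image_of_injOn]
    intro i hi j hj hij
    exact rk_injOn G π g hi hj hij

lemma rk_transport (g : Fin n) (f : ℕ → ℝ) :
    ∑ l ∈ G g, f (rkg G π g l) = ∑ a ∈ Finset.range (G g).card, f a := by
  classical
  rw [← rk_image G π g, Finset.sum_image]
  intro i hi j hj hij
  exact rk_injOn G π g hi hj hij

lemma sum_rk (g : Fin n) :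
    ∑ l ∈ G g, (rkg G π g l : ℝ) = ((G g).card : ℝ) * ((G g).card - 1) / 2 := by
  rw [rk_transport G π g (fun a => (a : ℝ))]; exact gauss _

lemma sum_rk2 (g : Fin n) :
    ∑ l ∈ G g, (rkg G π g l : ℝ) * (rkg G π g l : ℝ)
      = ((G g).card : ℝ) * ((G g).card - 1) * (2 * (G g).card - 1) / 6 := by
  rw [rk_transport G π g (fun a => (a : ℝ) * a)]; exact gauss2 _

lemma sum_cmp {g : Fin n} {b : Fin m} (hb : b ∈ G g) :
    ∑ a ∈ (G g).erase b, (if π.symm a < π.symm b then (1:ℝ) else -1)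
      = 2 * (rkg G π g b : ℝ) - ((G g).card - 1) := by
  classical
  have hpt : ∀ a, (if π.symm a < π.symm b then (1:ℝ) else -1)
      = 2 * (if π.symm a < π.symm b then (1:ℝ) else 0) - 1 := by
    intro a; split <;> norm_num
  rw [Finset.sum_congr rfl (fun a _ => hpt a)]
  rw [Finset.sum_sub_distrib, ← Finset.mul_sum, Finset.sum_ite, Finset.sum_const,
    Finset.sum_const, Finset.sum_const]
  have hfe : ((G g).erase b).filter (fun a => π.symm a < π.symm b)
      = (G g).filter (fun a => π.symm a < π.symm b) := by
    ext a
    simp only [Finset.mem_filter, Finset.mem_erase]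
    constructor
    · rintro ⟨⟨_, h1⟩, h2⟩; exact ⟨h1, h2⟩
    · rintro ⟨h1, h2⟩
      refine ⟨⟨?_, h1⟩, h2⟩
      rintro rfl; exact lt_irrefl _ h2
  rw [hfe, Finset.card_erase_of_mem hb]
  have h1 : 1 ≤ (G g).card := Finset.card_pos.mpr ⟨b, hb⟩
  have hcast : (((G g).card - 1 : ℕ) : ℝ) = ((G g).card : ℝ) - 1 := by
    push_cast [Nat.cast_sub h1]; ring
  simp only [smul_eq_mul, mul_one, mul_zero, add_zero, nsmul_eq_mul]
  rw [hcast]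
  unfold rkg
  ring

lemma sum_cmp' {g : Fin n} {l : Fin m} (hl : l ∈ G g) :
    ∑ c ∈ (G g).erase l, (if π.symm l < π.symm c then (1:ℝ) else -1)
      = ((G g).card : ℝ) - 1 - 2 * (rkg G π g l : ℝ) := by
  classical
  have hcong : ∀ c ∈ (G g).erase l,
      (if π.symm l < π.symm c then (1:ℝ) else -1)
        = -(if π.symm c < π.symm l then (1:ℝ) else -1) := by
    intro c hc
    rcases Finset.mem_erase.mp hc with ⟨hne, _⟩
    have hψ : π.symm c ≠ π.symm l := fun h => hne (π.symm.injective h)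
    rcases lt_or_gt_of_ne hψ with h | h <;> simp [h, asymm h]
  rw [Finset.sum_congr rfl hcong, Finset.sum_neg_distrib, sum_cmp G π hl]
  ring

lemma half (g : Fin n) (F : Fin m × Fin m → ℝ)
    (hsymm : ∀ a b : Fin m, a ≠ b → F (b, a) = F (a, b)) :
    2 * ∑ q ∈ Sg G g, F q
      = ∑ a ∈ G g, ∑ b ∈ G g, (if a = b then 0 else F (a, b)) := by
  classical
  have h1 : ∑ q ∈ Sg G g, F q
      = ∑ a ∈ G g, ∑ b ∈ G g, (if a < b then F (a, b) else 0) := by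
    rw [Sg, Finset.sum_filter, Finset.sum_product]
  have h2 : ∑ a ∈ G g, ∑ b ∈ G g, (if b < a then F (a, b) else 0)
      = ∑ a ∈ G g, ∑ b ∈ G g, (if a < b then F (a, b) else 0) := by
    rw [Finset.sum_comm]
    refine Finset.sum_congr rfl fun a _ => Finset.sum_congr rfl fun b _ => ?_
    by_cases h : a < b
    · rw [if_pos h, if_pos h, hsymm a b (ne_of_lt h)]
    · rw [if_neg h, if_neg h]
  have h3 : ∀ a b : Fin m, (if a = b then (0:ℝ) else F (a, b))
      = (if a < b then F (a, b) else 0) + (if b < a then F (a, b) else 0) := by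
    intro a b
    rcases lt_trichotomy a b with h | h | h
    · rw [if_neg (ne_of_lt h), if_pos h, if_neg (asymm h), add_zero]
    · subst h; simp
    · rw [if_neg (Ne.symm (ne_of_lt h)), if_neg (asymm h), if_pos h, zero_add]
  calc 2 * ∑ q ∈ Sg G g, F q
      = (∑ a ∈ G g, ∑ b ∈ G g, (if a < b then F (a, b) else 0))
        + ∑ a ∈ G g, ∑ b ∈ G g, (if b < a then F (a, b) else 0) := by
        rw [h1, h2]; ring
    _ = ∑ a ∈ G g, ∑ b ∈ G g, (if a = b then 0 else F (a, b)) := by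
        rw [← Finset.sum_add_distrib]
        refine Finset.sum_congr rfl fun a _ => ?_
        rw [← Finset.sum_add_distrib]
        exact Finset.sum_congr rfl fun b _ => (h3 a b).symm

end Main

section Main2
open Finset
variable {m n : ℕ} (G : Fin n → Finset (Fin m)) (π : Equiv.Perm (Fin m))
variable (hd : ∀ g h : Fin n, g ≠ h → Disjoint (G g) (G h))
variable (hc : ∀ x : Fin m, ∃ g, x ∈ G g)
include hd hc

lemma rk_eqg {g : Fin n} {i : Fin m} (hi : i ∈ G g) :
    rk G π hc i = rkg G π g i := by
  unfold rk; rw [gI_eq G hd hc hi]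

lemma ye_antisym {g : Fin n} {a b : Fin m} (ha : a ∈ G g) (hb : b ∈ G g) (hab : a ≠ b) :
    ye G π hc (b, a) = - ye G π hc (a, b) := by
  have hg : gI G hc b = gI G hc a := by rw [gI_eq G hd hc ha, gI_eq G hd hc hb]
  unfold ye xe
  simp only [hg]
  have hψ : π.symm a ≠ π.symm b := fun h => hab (π.symm.injective h)
  rcases lt_or_gt_of_ne hψ with h | h
  · rw [if_neg (asymm h), if_pos h]; ring
  · rw [if_pos h, if_neg (asymm h)]; ring

lemma filter_fst {g : Fin n} {l : Fin m} (hl : l ∈ G g) :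
    (SS G).filter (fun q => q.1 = l)
      = ((G g).filter (fun c => l < c)).map
          ⟨fun c => (l, c), Prod.mk_right_injective l⟩ := by
  classical
  ext ⟨a, b⟩
  simp only [SS, Finset.mem_filter, Finset.mem_map, Finset.mem_univ, true_and,
    Function.Embedding.coeFn_mk, Prod.mk.injEq]
  constructor
  · rintro ⟨⟨hab, g', hag', hbg'⟩, rfl⟩
    have := uniq G hd hag' hl
    subst this
    exact ⟨b, ⟨hbg', hab⟩, rfl, rfl⟩
  · rintro ⟨c, ⟨hcg, hlc⟩, rfl, rfl⟩
    exact ⟨⟨hlc, g, hl, hcg⟩, rfl⟩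

lemma filter_snd {g : Fin n} {l : Fin m} (hl : l ∈ G g) :
    (SS G).filter (fun q => q.2 = l)
      = ((G g).filter (fun c => c < l)).map
          ⟨fun c => (c, l), Prod.mk_left_injective l⟩ := by
  classical
  ext ⟨a, b⟩
  simp only [SS, Finset.mem_filter, Finset.mem_map, Finset.mem_univ, true_and,
    Function.Embedding.coeFn_mk, Prod.mk.injEq]
  constructor
  · rintro ⟨⟨hab, g', hag', hbg'⟩, rfl⟩
    have := uniq G hd hbg' hl
    subst this
    exact ⟨a, ⟨hag', hab⟩, rfl, rfl⟩
  · rintro ⟨c, ⟨hcg, hlc⟩, rfl, rfl⟩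
    exact ⟨⟨hlc, g, hcg, hl⟩, rfl⟩

lemma erase_split {g : Fin n} {l : Fin m} (hl : l ∈ G g) :
    (G g).filter (fun c => l < c) ∪ (G g).filter (fun c => c < l) = (G g).erase l := by
  classical
  ext c
  simp only [Finset.mem_union, Finset.mem_filter, Finset.mem_erase]
  constructor
  · rintro (⟨h1, h2⟩ | ⟨h1, h2⟩)
    · exact ⟨Ne.symm (ne_of_lt h2), h1⟩
    · exact ⟨ne_of_lt h2, h1⟩
  · rintro ⟨hne, hcg⟩
    rcases lt_or_gt_of_ne hne with h | h
    · exact Or.inr ⟨hcg, h⟩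
    · exact Or.inl ⟨hcg, h⟩

lemma Alem {g : Fin n} {l : Fin m} (hl : l ∈ G g) :
    ∑ q ∈ (SS G).filter (fun q => q.1 = l), ye G π hc q
      - ∑ q ∈ (SS G).filter (fun q => q.2 = l), ye G π hc q
    = 3 * (((G g).card : ℝ) - 1 - 2 * (rkg G π g l : ℝ))
      - 6 / (((G g).card : ℝ) + 1) *
        (((G g).card : ℝ) * (((G g).card : ℝ) - 1) / 2
          - ((G g).card : ℝ) * (rkg G π g l : ℝ)) := by
  classical
  rw [filter_fst G hd hc hl, filter_snd G hd hc hl, Finset.sum_map, Finset.sum_map]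
  simp only [Function.Embedding.coeFn_mk]
  have hneg : ∑ c ∈ (G g).filter (fun c => c < l), ye G π hc (c, l)
      = - ∑ c ∈ (G g).filter (fun c => c < l), ye G π hc (l, c) := by
    rw [← Finset.sum_neg_distrib]
    refine Finset.sum_congr rfl fun c hcm => ?_
    rcases Finset.mem_filter.mp hcm with ⟨hcg, hcl⟩
    rw [ye_antisym G π hd hc hl hcg (Ne.symm (ne_of_lt hcl))]
  rw [hneg, sub_neg_eq_add]
  have hdisj2 : Disjoint ((G g).filter (fun c => l < c)) ((G g).filter (fun c => c < l)) := by
    rw [Finset.disjoint_left]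
    intro c h1 h2
    rcases Finset.mem_filter.mp h1 with ⟨_, ha⟩
    rcases Finset.mem_filter.mp h2 with ⟨_, hb⟩
    exact absurd (ha.trans hb) (lt_irrefl _)
  rw [← Finset.sum_union hdisj2, erase_split G hd hc hl]
  have hyel : ∀ c ∈ (G g).erase l, ye G π hc (l, c)
      = 3 * (if π.symm l < π.symm c then (1:ℝ) else -1)
        - 6 / (((G g).card : ℝ) + 1) * ((rkg G π g c : ℝ) - (rkg G π g l : ℝ)) := by
    intro c hcm
    rcases Finset.mem_erase.mp hcm with ⟨hne, hcg⟩
    unfold ye xe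
    rw [gI_eq G hd hc hl, rk_eqg G π hd hc hcg, rk_eqg G π hd hc hl]
  rw [Finset.sum_congr rfl hyel, Finset.sum_sub_distrib, ← Finset.mul_sum, ← Finset.mul_sum]
  rw [sum_cmp' G π hl]
  have h1 : 1 ≤ (G g).card := Finset.card_pos.mpr ⟨l, hl⟩
  have hsum : ∑ c ∈ (G g).erase l, ((rkg G π g c : ℝ) - (rkg G π g l : ℝ))
      = ((G g).card : ℝ) * (((G g).card : ℝ) - 1) / 2 - ((G g).card : ℝ) * (rkg G π g l : ℝ) := by
    rw [Finset.sum_sub_distrib, Finset.sum_const, Finset.card_erase_of_mem hl]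
    rw [Finset.sum_erase_eq_sub hl, sum_rk G π g]
    have hcast : (((G g).card - 1 : ℕ) : ℝ) = ((G g).card : ℝ) - 1 := by
      push_cast [Nat.cast_sub h1]; ring
    rw [nsmul_eq_mul, hcast]
    ring
  rw [hsum]

end Main2

section Main3
open Finset
variable {m n : ℕ} (G : Fin n → Finset (Fin m)) (π : Equiv.Perm (Fin m))
variable (hd : ∀ g h : Fin n, g ≠ h → Disjoint (G g) (G h))
variable (hc : ∀ x : Fin m, ∃ g, x ∈ G g)

/-- raw-pair version of the matrix entry -/
noncomputable def Eent (u v : Fin m × Fin m) : ℝ :=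
  if u = v then 1
  else if u.1 = v.1 ∨ u.2 = v.2 then 1/3
  else if u.2 = v.1 ∨ u.1 = v.2 then -(1/3)
  else 0

omit hd hc in
lemma Ment (p q : GPair G) : Mmom G (Sum.inr p) (Sum.inr q) = Eent p.1 q.1 := by
  show (if p = q then (1:ℝ)
      else if p.1.1 = q.1.1 ∨ p.1.2 = q.1.2 then 1/3
      else if p.1.2 = q.1.1 ∨ p.1.1 = q.1.2 then -(1/3) else 0) = _
  unfold Eent
  by_cases h : p = q
  · rw [if_pos h, if_pos (congrArg Subtype.val h)]
  · rw [if_neg h, if_neg (fun hh => h (Subtype.ext hh))]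

include hd hc in
lemma rowkey {i j : Fin m} {g : Fin n} (hij : i < j) (hig : i ∈ G g) (hjg : j ∈ G g) :
    ∑ q ∈ SS G, Eent (i, j) q * ye G π hc q = xe π (i, j) := by
  classical
  have hmem : (i, j) ∈ SS G := by
    simp only [SS, Finset.mem_filter, Finset.mem_univ, true_and]
    exact ⟨hij, g, hig, hjg⟩
  have hpt : ∀ q ∈ SS G, Eent (i,j) q * ye G π hc q
      = (if (i,j) = q then ye G π hc q * (1/3) else 0)
        + 1/3 * ((if i = q.1 then ye G π hc q else 0) + (if j = q.2 then ye G π hc q else 0)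
          - (if i = q.2 then ye G π hc q else 0) - (if j = q.1 then ye G π hc q else 0)) := by
    rintro ⟨a, b⟩ hq
    rcases Finset.mem_filter.mp hq with ⟨-, hab, -⟩
    have : Eent (i, j) (a, b)
        = (if (i,j) = (a,b) then (1:ℝ) else if i = a ∨ j = b then 1/3
            else if j = a ∨ i = b then -(1/3) else 0) := rfl
    rw [this, Eraw i j a b hij hab]
    split_ifs <;> ring
  rw [Finset.sum_congr rfl hpt, Finset.sum_add_distrib]
  rw [Finset.sum_ite_eq (SS G) ((i,j)) (fun q => ye G π hc q * (1/3)), if_pos hmem]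
  have e1 : ∀ (w : Fin m), ∑ q ∈ SS G, (if w = q.1 then ye G π hc q else 0)
      = ∑ q ∈ (SS G).filter (fun q => q.1 = w), ye G π hc q := by
    intro w
    rw [Finset.sum_filter]
    exact Finset.sum_congr rfl fun q _ => if_congr eq_comm rfl rfl
  have e2 : ∀ (w : Fin m), ∑ q ∈ SS G, (if w = q.2 then ye G π hc q else 0)
      = ∑ q ∈ (SS G).filter (fun q => q.2 = w), ye G π hc q := by
    intro w
    rw [Finset.sum_filter]
    exact Finset.sum_congr rfl fun q _ => if_congr eq_comm rfl rfl
  rw [← Finset.mul_sum, Finset.sum_sub_distrib, Finset.sum_sub_distrib, Finset.sum_add_distrib]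
  rw [e1 i, e1 j, e2 i, e2 j]
  have hiA := Alem G π hd hc hig
  have hjA := Alem G π hd hc hjg
  set Ai1 := ∑ q ∈ (SS G).filter (fun q => q.1 = i), ye G π hc q
  set Ai2 := ∑ q ∈ (SS G).filter (fun q => q.2 = i), ye G π hc q
  set Aj1 := ∑ q ∈ (SS G).filter (fun q => q.1 = j), ye G π hc q
  set Aj2 := ∑ q ∈ (SS G).filter (fun q => q.2 = j), ye G π hc q
  have hyij : ye G π hc (i, j) = 3 * xe π (i, j)
      - 6 / (((G g).card : ℝ) + 1) * ((rkg G π g j : ℝ) - (rkg G π g i : ℝ)) := by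
    unfold ye
    rw [gI_eq G hd hc hig, rk_eqg G π hd hc hjg, rk_eqg G π hd hc hig]
  have hK : ((G g).card : ℝ) + 1 ≠ 0 := by positivity
  rw [hyij]
  have expand : Ai1 + Aj2 - Ai2 - Aj1 = (Ai1 - Ai2) - (Aj1 - Aj2) := by ring
  have key : Ai1 + Aj2 - Ai2 - Aj1
      = 6 / (((G g).card : ℝ) + 1) * ((rkg G π g j : ℝ) - (rkg G π g i : ℝ)) := by
    rw [expand, hiA, hjA]
    field_simp
    ring
  rw [key]
  field_simp
  ring

end Main3

section Main4
open Finset Matrix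
variable {m n : ℕ} (G : Fin n → Finset (Fin m)) (π : Equiv.Perm (Fin m))
variable (hd : ∀ g h : Fin n, g ≠ h → Disjoint (G g) (G h))
variable (hc : ∀ x : Fin m, ∃ g, x ∈ G g)

/-- the "design" matrix -/
noncomputable def Tm : Matrix (Unit ⊕ GPair G) (Fin m) ℝ := fun a l =>
  match a with
  | Sum.inl _ => 0
  | Sum.inr p => (if l = p.1.1 then 1 else 0) - (if l = p.1.2 then 1 else 0)

noncomputable def Dv : (Unit ⊕ GPair G) → ℝ := Sum.elim (fun _ => 1) (fun _ => 1/3)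

omit hd hc in
lemma TT (p q : GPair G) : (Tm G * (Tm G)ᵀ) (Sum.inr p) (Sum.inr q)
    = (if p.1.1 = q.1.1 then (1:ℝ) else 0) + (if p.1.2 = q.1.2 then 1 else 0)
      - (if p.1.1 = q.1.2 then 1 else 0) - (if p.1.2 = q.1.1 then 1 else 0) := by
  classical
  have : ∀ l : Fin m, Tm G (Sum.inr p) l * (Tm G)ᵀ l (Sum.inr q)
      = ((if l = p.1.1 then (1:ℝ) else 0) * (if l = q.1.1 then 1 else 0)
          + (if l = p.1.2 then 1 else 0) * (if l = q.1.2 then 1 else 0))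
        - ((if l = p.1.1 then 1 else 0) * (if l = q.1.2 then 1 else 0)
          + (if l = p.1.2 then 1 else 0) * (if l = q.1.1 then 1 else 0)) := by
    intro l
    show ((if l = p.1.1 then (1:ℝ) else 0) - (if l = p.1.2 then 1 else 0))
        * ((if l = q.1.1 then (1:ℝ) else 0) - (if l = q.1.2 then 1 else 0)) = _
    ring
  show (∑ l, Tm G (Sum.inr p) l * (Tm G)ᵀ l (Sum.inr q)) = _
  rw [Finset.sum_congr rfl (fun l _ => this l)]
  rw [Finset.sum_sub_distrib, Finset.sum_add_distrib, Finset.sum_add_distrib]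
  have key : ∀ u v : Fin m, ∑ l : Fin m,
      (if l = u then (1:ℝ) else 0) * (if l = v then 1 else 0) = if u = v then 1 else 0 := by
    intro u v
    have : ∀ l : Fin m, (if l = u then (1:ℝ) else 0) * (if l = v then 1 else 0)
        = if l = u then (if l = v then (1:ℝ) else 0) else 0 := by
      intro l; split_ifs <;> norm_num
    rw [Finset.sum_congr rfl (fun l _ => this l),
      Finset.sum_ite_eq' Finset.univ u (fun l => if l = v then (1:ℝ) else 0)]
    simp
  rw [key, key, key, key]
  ring

omit hd hc in
lemma Mdecomp : Mmom G = Matrix.diagonal (Dv G) + (1/3 : ℝ) • (Tm G * (Tm G)ᵀ) := by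
  classical
  ext a b
  rcases a with u | p <;> rcases b with v | q
  · show (1:ℝ) = _
    have : (Tm G * (Tm G)ᵀ) (Sum.inl u) (Sum.inl v) = 0 := by
      show (∑ l, Tm G (Sum.inl u) l * (Tm G)ᵀ l (Sum.inl v)) = 0
      simp [Tm]
    rw [Matrix.add_apply, Matrix.smul_apply, this, Matrix.diagonal_apply]
    cases u; cases v; simp [Dv]
  · show (0:ℝ) = _
    have : (Tm G * (Tm G)ᵀ) (Sum.inl u) (Sum.inr q) = 0 := by
      show (∑ l, Tm G (Sum.inl u) l * (Tm G)ᵀ l (Sum.inr q)) = 0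
      simp [Tm]
    rw [Matrix.add_apply, Matrix.smul_apply, this, Matrix.diagonal_apply]
    simp
  · show (0:ℝ) = _
    have : (Tm G * (Tm G)ᵀ) (Sum.inr p) (Sum.inl v) = 0 := by
      show (∑ l, Tm G (Sum.inr p) l * (Tm G)ᵀ l (Sum.inl v)) = 0
      simp [Tm, Matrix.transpose_apply]
    rw [Matrix.add_apply, Matrix.smul_apply, this, Matrix.diagonal_apply]
    simp
  · rw [Ment G p q, Matrix.add_apply, Matrix.smul_apply, TT G p q, Matrix.diagonal_apply]
    have hsum : (if Sum.inr p = (Sum.inr q : Unit ⊕ GPair G) then Dv G (Sum.inr p) else 0)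
        = (if p.1 = q.1 then (1/3 : ℝ) else 0) := by
      simp only [Sum.inr.injEq, Dv, Sum.elim_inr]
      exact if_congr (by rw [Subtype.ext_iff]) rfl rfl
    rw [hsum]
    obtain ⟨⟨i, j⟩, hij, -⟩ := p
    obtain ⟨⟨a, b⟩, hab, -⟩ := q
    show (if (i,j) = (a,b) then (1:ℝ) else if i = a ∨ j = b then 1/3
        else if j = a ∨ i = b then -(1/3) else 0) = _
    rw [Eraw i j a b hij hab]
    simp only [smul_eq_mul]
    try ring

omit hd hc in
lemma Mdet : (Mmom G).det ≠ 0 := by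
  classical
  intro h
  obtain ⟨v, hv0, hv⟩ := (Matrix.exists_mulVec_eq_zero_iff).mpr h
  have hq : dotProduct v ((Mmom G).mulVec v) = 0 := by
    rw [hv, dotProduct_zero]
  rw [Mdecomp G, Matrix.add_mulVec, dotProduct_add, Matrix.smul_mulVec,
    dotProduct_smul] at hq
  have hTT : dotProduct v ((Tm G * (Tm G)ᵀ).mulVec v) ≥ 0 := by
    rw [← Matrix.mulVec_mulVec, Matrix.dotProduct_mulVec, ← Matrix.mulVec_transpose]
    have : ∀ l : Fin m, 0 ≤ ((Tm G)ᵀ.mulVec v) l * ((Tm G)ᵀ.mulVec v) l :=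
      fun l => mul_self_nonneg _
    exact Finset.sum_nonneg fun l _ => this l
  have hD : dotProduct v ((Matrix.diagonal (Dv G)).mulVec v)
      ≥ (1/3) * ∑ a, v a * v a := by
    unfold dotProduct
    rw [Finset.mul_sum]
    apply Finset.sum_le_sum
    intro a _
    rw [Matrix.mulVec_diagonal]
    have h1 : (1/3 : ℝ) ≤ Dv G a := by
      rcases a with u | p <;> simp [Dv] <;> norm_num
    have h2 : 0 ≤ v a * v a := mul_self_nonneg _
    calc (1/3) * (v a * v a) ≤ Dv G a * (v a * v a) := by
          apply mul_le_mul_of_nonneg_right h1 h2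
      _ = v a * (Dv G a * v a) := by ring
  have hpos : 0 < ∑ a, v a * v a := by
    obtain ⟨a, ha⟩ := Function.ne_iff.mp hv0
    apply Finset.sum_pos' (fun b _ => mul_self_nonneg _)
    exact ⟨a, Finset.mem_univ a, mul_self_pos.mpr ha⟩
  rw [smul_eq_mul] at hq
  linarith

end Main4

section Main5
open Finset Matrix
variable {m n : ℕ} (G : Fin n → Finset (Fin m)) (π : Equiv.Perm (Fin m))
variable (hd : ∀ g h : Fin n, g ≠ h → Disjoint (G g) (G h))
variable (hc : ∀ x : Fin m, ∃ g, x ∈ G g)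

omit hd hc in
lemma card_Sg_real (g : Fin n) :
    2 * ((Sg G g).card : ℝ) = ((G g).card : ℝ) * (((G g).card : ℝ) - 1) := by
  classical
  have h := half G g (fun _ => (1:ℝ)) (fun _ _ _ => rfl)
  rw [Finset.sum_const, nsmul_eq_mul, mul_one] at h
  rw [h]
  have hin : ∀ a ∈ G g, ∑ b ∈ G g, (if a = b then (0:ℝ) else 1) = ((G g).card : ℝ) - 1 := by
    intro a ha
    have hb : ∀ b : Fin m, (if a = b then (0:ℝ) else 1) = 1 - (if a = b then 1 else 0) := by
      intro b; split <;> norm_num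
    rw [Finset.sum_congr rfl (fun b _ => hb b), Finset.sum_sub_distrib, Finset.sum_const,
      Finset.sum_ite_eq (G g) a (fun _ => (1:ℝ)), if_pos ha, nsmul_eq_mul, mul_one]
  rw [Finset.sum_congr rfl hin, Finset.sum_const, nsmul_eq_mul]

omit hd hc in
lemma cardSg (g : Fin n) (hg : (G g).Nonempty) :
    (Sg G g).card = (G g).card * ((G g).card - 1) / 2 := by
  have h1 : 1 ≤ (G g).card := Finset.card_pos.mpr hg
  have h2 : ((2 * (Sg G g).card : ℕ) : ℝ) = (((G g).card * ((G g).card - 1) : ℕ) : ℝ) := by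
    push_cast [Nat.cast_sub h1]
    have := card_Sg_real G g
    linarith
  have h3 : 2 * (Sg G g).card = (G g).card * ((G g).card - 1) := Nat.cast_injective h2
  omega

include hd hc in
lemma grpSum (g : Fin n) :
    ∑ q ∈ Sg G g, xe π q * ye G π hc q
      = ((G g).card : ℝ) * (((G g).card : ℝ) - 1) / 2 := by
  classical
  set K : ℝ := ((G g).card : ℝ) with hKdef
  have hK : K + 1 ≠ 0 := by positivity
  set xer : Fin m → Fin m → ℝ := fun a b => if a = b then 0 else xe π (a, b) with hxer
  have xer_anti : ∀ a b : Fin m, xer b a = - xer a b := by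
    intro a b
    by_cases h : a = b
    · subst h; simp [hxer]
    · have hψ : π.symm a ≠ π.symm b := fun hh => h (π.symm.injective hh)
      simp only [hxer, if_neg h, if_neg (Ne.symm h)]
      unfold xe
      rcases lt_or_gt_of_ne hψ with hlt | hlt
      · rw [if_pos hlt, if_neg (asymm hlt)]; try ring
      · rw [if_neg (asymm hlt), if_pos hlt]; try ring
  have sum_xer : ∀ b ∈ G g, ∑ a ∈ G g, xer a b = 2 * (rkg G π g b : ℝ) - (K - 1) := by
    intro b hb
    rw [← Finset.sum_erase (G g) (f := fun a => xer a b) (a := b) (by simp [hxer])]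
    have hco : ∀ a ∈ (G g).erase b,
        xer a b = if π.symm a < π.symm b then (1:ℝ) else -1 := by
      intro a ha
      rcases Finset.mem_erase.mp ha with ⟨hne, _⟩
      simp only [hxer, if_neg hne]
      rfl
    rw [Finset.sum_congr rfl hco]
    exact sum_cmp G π hb
  -- the signed rank-difference sum over the group pairs
  have hP : ∑ q ∈ Sg G g, xe π q * ((rkg G π g q.2 : ℝ) - (rkg G π g q.1 : ℝ))
      = 2 * (K * (K-1) * (2*K-1) / 6) - (K - 1) * (K * (K-1) / 2) := by
    have hsymm : ∀ a b : Fin m, a ≠ b →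
        xe π (b, a) * ((rkg G π g a : ℝ) - (rkg G π g b : ℝ))
          = xe π (a, b) * ((rkg G π g b : ℝ) - (rkg G π g a : ℝ)) := by
      intro a b hab
      have h1 : xe π (b, a) = - xe π (a, b) := by
        have := xer_anti a b
        simp only [hxer, if_neg hab, if_neg (Ne.symm hab)] at this
        exact this
      rw [h1]; ring
    have h := half G g (fun q => xe π q * ((rkg G π g q.2 : ℝ) - (rkg G π g q.1 : ℝ))) hsymm
    have hpt : ∀ a ∈ G g, ∀ b ∈ G g,
        (if a = b then (0:ℝ) else xe π (a, b) * ((rkg G π g b : ℝ) - (rkg G π g a : ℝ)))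
          = xer a b * (rkg G π g b : ℝ) - xer a b * (rkg G π g a : ℝ) := by
      intro a _ b _
      by_cases hab : a = b
      · subst hab; simp [hxer]
      · simp only [hxer, if_neg hab]; ring
    rw [Finset.sum_congr rfl (fun a ha => Finset.sum_congr rfl (fun b hb => hpt a ha b hb))] at h
    have hsplit : ∑ a ∈ G g, ∑ b ∈ G g,
        (xer a b * (rkg G π g b : ℝ) - xer a b * (rkg G π g a : ℝ))
        = (∑ a ∈ G g, ∑ b ∈ G g, xer a b * (rkg G π g b : ℝ))
          - ∑ a ∈ G g, ∑ b ∈ G g, xer a b * (rkg G π g a : ℝ) := by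
      rw [← Finset.sum_sub_distrib]
      exact Finset.sum_congr rfl fun a _ => Finset.sum_sub_distrib _ _
    have hswap : ∑ a ∈ G g, ∑ b ∈ G g, xer a b * (rkg G π g a : ℝ)
        = - ∑ a ∈ G g, ∑ b ∈ G g, xer a b * (rkg G π g b : ℝ) := by
      rw [Finset.sum_comm, ← Finset.sum_neg_distrib]
      refine Finset.sum_congr rfl fun x _ => ?_
      rw [← Finset.sum_neg_distrib]
      refine Finset.sum_congr rfl fun y _ => ?_
      rw [xer_anti x y]
      ring
    have hfirst : ∑ a ∈ G g, ∑ b ∈ G g, xer a b * (rkg G π g b : ℝ)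
        = 2 * (K * (K-1) * (2*K-1) / 6) - (K - 1) * (K * (K-1) / 2) := by
      rw [Finset.sum_comm]
      have hin : ∀ b ∈ G g, ∑ a ∈ G g, xer a b * (rkg G π g b : ℝ)
          = 2 * ((rkg G π g b : ℝ) * (rkg G π g b : ℝ)) - (K - 1) * (rkg G π g b : ℝ) := by
        intro b hb
        rw [← Finset.sum_mul, sum_xer b hb]
        ring
      rw [Finset.sum_congr rfl hin, Finset.sum_sub_distrib, ← Finset.mul_sum, ← Finset.mul_sum,
        sum_rk2 G π g, sum_rk G π g]
    rw [hsplit, hswap, hfirst] at h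
    linarith
  -- final
  have hpt2 : ∀ q ∈ Sg G g, xe π q * ye G π hc q
      = 3 - 6/(K+1) * (xe π q * ((rkg G π g q.2 : ℝ) - (rkg G π g q.1 : ℝ))) := by
    rintro ⟨a, b⟩ hq
    rcases Finset.mem_filter.mp hq with ⟨hab2, -⟩
    rcases Finset.mem_product.mp hab2 with ⟨ha, hb⟩
    have hxx : xe π (a, b) * xe π (a, b) = 1 := by
      unfold xe; split <;> norm_num
    have hye : ye G π hc (a, b) = 3 * xe π (a, b)
        - 6/(K+1) * ((rkg G π g b : ℝ) - (rkg G π g a : ℝ)) := by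
      unfold ye
      rw [gI_eq G hd hc ha, rk_eqg G π hd hc hb, rk_eqg G π hd hc ha]
    rw [hye]
    calc xe π (a, b) * (3 * xe π (a, b) - 6/(K+1) * ((rkg G π g b : ℝ) - (rkg G π g a : ℝ)))
        = 3 * (xe π (a, b) * xe π (a, b))
          - 6/(K+1) * (xe π (a, b) * ((rkg G π g b : ℝ) - (rkg G π g a : ℝ))) := by ring
      _ = 3 - 6/(K+1) * (xe π (a, b) * ((rkg G π g b : ℝ) - (rkg G π g a : ℝ))) := by
            rw [hxx]; ring
  rw [Finset.sum_congr rfl hpt2, Finset.sum_sub_distrib, Finset.sum_const, ← Finset.mul_sum, hP]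
  have hcR := card_Sg_real G g
  rw [nsmul_eq_mul]
  have : ((Sg G g).card : ℝ) = K * (K - 1) / 2 := by rw [hKdef]; linarith
  rw [this]
  field_simp
  ring

omit hd hc in
lemma SS_biUnion : SS G = Finset.univ.biUnion (fun g => Sg G g) := by
  classical
  ext ⟨a, b⟩
  simp only [SS, Sg, Finset.mem_filter, Finset.mem_univ, true_and, Finset.mem_biUnion,
    Finset.mem_product]
  tauto

include hd in
lemma Sg_pairwise : ((Finset.univ : Finset (Fin n)) : Set (Fin n)).PairwiseDisjoint (fun g => Sg G g) := by
  intro g _ h _ hgh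
  rw [Function.onFun, Finset.disjoint_left]
  intro p hp hq
  rcases Finset.mem_filter.mp hp with ⟨hp2, -⟩
  rcases Finset.mem_filter.mp hq with ⟨hq2, -⟩
  exact hgh (uniq G hd (Finset.mem_product.mp hp2).1 (Finset.mem_product.mp hq2).1)

include hd in
lemma SS_sum (f : Fin m × Fin m → ℝ) :
    ∑ q ∈ SS G, f q = ∑ g, ∑ q ∈ Sg G g, f q := by
  rw [SS_biUnion, Finset.sum_biUnion (Sg_pairwise G hd)]

include hd in
lemma SS_card : (SS G).card = ∑ g, (Sg G g).card := by
  rw [SS_biUnion, Finset.card_biUnion]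
  intro g _ h _ hgh
  exact Sg_pairwise G hd (Finset.mem_coe.mpr (Finset.mem_univ g))
    (Finset.mem_coe.mpr (Finset.mem_univ h)) hgh

/-- the explicit solution of `M y = x` -/
noncomputable def yv : (Unit ⊕ GPair G) → ℝ :=
  Sum.elim (fun _ => 1) (fun q => ye G π hc q.1)

omit hd in
lemma SS_mem : ∀ q : Fin m × Fin m,
    q ∈ SS G ↔ (q.1 < q.2 ∧ ∃ g, q.1 ∈ G g ∧ q.2 ∈ G g) := by
  intro q
  simp [SS]

include hd hc in
lemma MmulY : (Mmom G).mulVec (yv G π hc) = xvec G π := by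
  classical
  funext a
  rcases a with u | p
  · show (∑ b, Mmom G (Sum.inl u) b * yv G π hc b) = 1
    rw [Fintype.sum_sum_type]
    have h1 : ∑ u' : Unit, Mmom G (Sum.inl u) (Sum.inl u') * yv G π hc (Sum.inl u') = 1 := by
      simp [Mmom, yv]
    have h2 : ∑ q : GPair G, Mmom G (Sum.inl u) (Sum.inr q) * yv G π hc (Sum.inr q) = 0 := by
      simp [Mmom]
    rw [h1, h2, add_zero]
  · show (∑ b, Mmom G (Sum.inr p) b * yv G π hc b) = xvec G π (Sum.inr p)
    rw [Fintype.sum_sum_type]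
    have h1 : ∑ u' : Unit, Mmom G (Sum.inr p) (Sum.inl u') * yv G π hc (Sum.inl u') = 0 := by
      simp [Mmom]
    have h2 : ∀ q : GPair G, Mmom G (Sum.inr p) (Sum.inr q) * yv G π hc (Sum.inr q)
        = Eent (p : Fin m × Fin m) (q : Fin m × Fin m) * ye G π hc (q : Fin m × Fin m) := by
      intro q
      rw [Ment G p q]
      rfl
    rw [h1, zero_add, Fintype.sum_congr _ _ h2]
    rw [← Finset.sum_subtype (SS G) (SS_mem G)
      (fun q => Eent (p : Fin m × Fin m) q * ye G π hc q)]
    obtain ⟨⟨i, j⟩, hij, g, hig, hjg⟩ := p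
    exact rowkey G π hd hc hij hig hjg

end Main5

end S13

theorem stmt13 (m n : ℕ) (G : Fin n → Finset (Fin m))
    (hdisj : ∀ g h : Fin n, g ≠ h → Disjoint (G g) (G h))
    (hcover : ∀ x : Fin m, ∃ g, x ∈ G g)
    (hne : ∀ g, (G g).Nonempty)
    (π : Equiv.Perm (Fin m))
    (hfeas : ∀ g h : Fin n, g < h → ∀ i ∈ G g, ∀ j ∈ G h, π.symm i < π.symm j) :
    dotProduct (xvec G π) ((Mmom G)⁻¹.mulVec (xvec G π))
        = 1 + ∑ g, ((G g).card : ℝ) * (((G g).card : ℝ) - 1) / 2 ∧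
    (Fintype.card (Unit ⊕ GPair G)
        = 1 + ∑ g, (G g).card * ((G g).card - 1) / 2) := by
  classical
  constructor
  · have hdet : IsUnit (Mmom G).det := isUnit_iff_ne_zero.mpr (S13.Mdet G)
    have hy : (Mmom G)⁻¹.mulVec (xvec G π) = S13.yv G π hcover := by
      rw [← S13.MmulY G π hdisj hcover, Matrix.mulVec_mulVec,
        Matrix.nonsing_inv_mul _ hdet, Matrix.one_mulVec]
    rw [hy]
    show (∑ a, xvec G π a * S13.yv G π hcover a) = _
    rw [Fintype.sum_sum_type]
    have h1 : ∑ u : Unit, xvec G π (Sum.inl u) * S13.yv G π hcover (Sum.inl u) = 1 := by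
      simp [xvec, S13.yv]
    have h2 : ∑ q : GPair G, xvec G π (Sum.inr q) * S13.yv G π hcover (Sum.inr q)
        = ∑ g, ((G g).card : ℝ) * (((G g).card : ℝ) - 1) / 2 := by
      have hq : ∀ q : GPair G, xvec G π (Sum.inr q) * S13.yv G π hcover (Sum.inr q)
          = S13.xe π q.1 * S13.ye G π hcover q.1 := fun q => rfl
      rw [Fintype.sum_congr _ _ hq,
        ← Finset.sum_subtype (S13.SS G) (S13.SS_mem G)
          (fun q => S13.xe π q * S13.ye G π hcover q),
        S13.SS_sum G hdisj]
      exact Finset.sum_congr rfl fun g _ => S13.grpSum G π hdisj hcover g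
    rw [h1, h2]
  · rw [Fintype.card_sum, Fintype.card_unit]
    have hcc : Fintype.card (GPair G) = (S13.SS G).card := by
      rw [Fintype.card_subtype, S13.SS]
    rw [hcc, S13.SS_card G hdisj]
    congr 1
    exact Finset.sum_congr rfl fun g _ => S13.cardSg G g (hne g)
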